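/- Consider the problem: minimize φ(x) subject to F(x) ∈ X, with feasible set Ω := {x : F(x) ∈ X}, where X ⊆ ℝᵐ is closed, F : ℝⁿ → ℝᵐ is semi-differentiable at x̄ ∈ Ω, φ is Lipschitz continuous around x̄ with constant ℓ ≥ 0, and the metric subregularity constraint qualification dist(x; Ω) ≤ κ·dist(F(x); X) holds for all x near x̄ with constant κ > 0. If x̄ is a d-stationary point of the constrained problem (F(x̄) ∈ X and d φ(x̄)(w) ≥ 0 for all w with dF(x̄)(w) ∈ T_X(F(x̄))), then for every ρ ≥ κℓ, x̄ is a d-stationary point of the penalized function f_ρ(x) := φ(x) + ρ·dist(F(x); X), i.e. d f_ρ(x̄)(w) ≥ 0 for all w ∈ ℝⁿ. -/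

import Mathlib

open Filter Topology Metric Set

abbrev En (n : ℕ) := EuclideanSpace ℝ (Fin n)

/-- Subderivative `d f(x)(w) := liminf_{t↓0, w'→w} (f(x+tw') − f(x))/t`. -/
noncomputable def subderiv {V : Type*} [NormedAddCommGroup V] [NormedSpace ℝ V]
    (f : V → ℝ) (x w : V) : EReal :=
  Filter.liminf (fun p : ℝ × V => (((f (x + p.1 • p.2) - f x) / p.1 : ℝ) : EReal))
    ((𝓝[>] (0:ℝ)) ×ˢ 𝓝 w)

/-- Semi-differentiability with semi-derivative `g`. -/
def HasSemiDerivAt {V W : Type*} [NormedAddCommGroup V] [NormedSpace ℝ V]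
    [NormedAddCommGroup W] [NormedSpace ℝ W] (F : V → W) (x : V) (g : V → W) : Prop :=
  ∀ w, Filter.Tendsto (fun p : ℝ × V => (p.1)⁻¹ • (F (x + p.1 • p.2) - F x))
    ((𝓝[>] (0:ℝ)) ×ˢ 𝓝 w) (𝓝 (g w))

/-- Bouligand tangent cone. -/
def tanCone {V : Type*} [NormedAddCommGroup V] [NormedSpace ℝ V] (X : Set V) (x : V) : Set V :=
  {w | ∃ t : ℕ → ℝ, ∃ v : ℕ → V, (∀ k, 0 < t k) ∧ Filter.Tendsto t Filter.atTop (𝓝 0) ∧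
    Filter.Tendsto v Filter.atTop (𝓝 w) ∧ ∀ k, x + t k • v k ∈ X}

lemma liminf_comp_le {α : Type*} {f : Filter α} (u : α → EReal) (m : ℕ → α)
    (h : Tendsto m atTop f) : Filter.liminf u f ≤ Filter.liminf (fun k => u (m k)) atTop := by
  have h1 : Filter.liminf u f ≤ Filter.liminf u (Filter.map m atTop) :=
    Filter.liminf_le_liminf_of_le h
  simpa only [Filter.liminf, Filter.map_map, Function.comp_def] using h1


set_option maxHeartbeats 1000000 in
/-- A feasible d-stationary point of the constrained problem is a d-stationary point of the
exact penalty `f_ρ = φ + ρ·dist(F(·);X)` for every `ρ ≥ κℓ`, under the metric subregularity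
constraint qualification with constant `κ`. -/
theorem stmt14 {n m : ℕ} (φ : En n → ℝ) (F : En n → En m) (X : Set (En m)) (hX : IsClosed X)
    (xb : En n) (hxb : F xb ∈ X) (dF : En n → En m) (hF : HasSemiDerivAt F xb dF)
    (ℓ : ℝ) (hℓ : 0 ≤ ℓ)
    (hLip : ∃ δ > (0:ℝ), ∀ x ∈ ball xb δ, ∀ y ∈ ball xb δ, |φ x - φ y| ≤ ℓ * dist x y)
    (κ : ℝ) (hκ : 0 < κ)
    (hMS : ∀ᶠ x in 𝓝 xb, infDist x {z | F z ∈ X} ≤ κ * infDist (F x) X)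
    (hstat : ∀ w, dF w ∈ tanCone X (F xb) → (0 : EReal) ≤ subderiv φ xb w) :
    ∀ ρ : ℝ, κ * ℓ ≤ ρ →
      ∀ w, (0 : EReal) ≤ subderiv (fun x => φ x + ρ * infDist (F x) X) xb w := by
  obtain ⟨δ, hδ, hL⟩ := hLip
  intro ρ hρ w
  by_contra hneg
  rw [not_le] at hneg
  set Ω : Set (En n) := {z | F z ∈ X} with hΩdef
  have hΩne : Ω.Nonempty := ⟨xb, hxb⟩
  have hFxb0 : infDist (F xb) X = 0 := infDist_zero_of_mem hxb
  obtain ⟨c, hc1, hc2⟩ := EReal.exists_between_coe_real hneg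
  have hc0 : c < 0 := by exact_mod_cast hc2
  -- extract a sequence along which the penalty quotient is < c
  have hfreq : ∃ᶠ p : ℝ × En n in (𝓝[>] (0:ℝ)) ×ˢ 𝓝 w,
      ((φ (xb + p.1 • p.2) + ρ * infDist (F (xb + p.1 • p.2)) X -
        (φ xb + ρ * infDist (F xb) X)) / p.1) < c := by
    have h := Filter.frequently_lt_of_liminf_lt (h := hc1)
    exact h.mono fun p hp => by exact_mod_cast hp
  obtain ⟨u, hu, huc⟩ := Filter.exists_seq_forall_of_frequently hfreq
  set t : ℕ → ℝ := fun k => (u k).1 with htdef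
  set ω : ℕ → En n := fun k => (u k).2 with hωdef
  have ht : Tendsto t atTop (𝓝[>] (0:ℝ)) := (tendsto_fst).comp hu
  have hω : Tendsto ω atTop (𝓝 w) := (tendsto_snd).comp hu
  have ht0 : Tendsto t atTop (𝓝 (0:ℝ)) := ht.mono_right nhdsWithin_le_nhds
  set x : ℕ → En n := fun k => xb + t k • ω k with hxdef
  have hx : Tendsto x atTop (𝓝 xb) := by
    have h1 : Tendsto (fun k => t k • ω k) atTop (𝓝 ((0:ℝ) • w)) := ht0.smul hω
    rw [zero_smul] at h1
    simpa using tendsto_const_nhds.add h1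
  set d : ℕ → ℝ := fun k => infDist (F (x k)) X with hddef
  have hq : ∀ k, (φ (x k) + ρ * d k - (φ xb + ρ * infDist (F xb) X)) / t k < c := by
    intro k; exact huc k
  have hFw : Tendsto (fun k => (t k)⁻¹ • (F (x k) - F xb)) atTop (𝓝 (dF w)) :=
    (hF w).comp hu
  have hnorm : Tendsto (fun k => ‖(t k)⁻¹ • (F (x k) - F xb)‖) atTop (𝓝 ‖dF w‖) := hFw.norm
  -- choose near-projections z k onto Ω
  have hzex : ∀ k, ∃ zk, 0 < t k → zk ∈ Ω ∧ dist (x k) zk < infDist (x k) Ω + t k ^ 2 := by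
    intro k
    by_cases hk : 0 < t k
    · have h2 : infDist (x k) Ω < infDist (x k) Ω + t k ^ 2 :=
        lt_add_of_pos_right _ (by positivity)
      obtain ⟨zk, hz1, hz2⟩ := (infDist_lt_iff hΩne).mp h2
      exact ⟨zk, fun _ => ⟨hz1, hz2⟩⟩
    · exact ⟨xb, fun h => absurd h hk⟩
  choose z hz using hzex
  set v : ℕ → En n := fun k => (t k)⁻¹ • (z k - xb) with hvdef
  have hzv : ∀ k, 0 < t k → xb + t k • v k = z k := by
    intro k hk
    show xb + t k • (t k)⁻¹ • (z k - xb) = z k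
    rw [smul_inv_smul₀ hk.ne', add_sub_cancel]
  set C : ℝ := κ * (‖dF w‖ + 1) + 1 + (‖w‖ + 1) with hCdef
  have hC : 0 < C := by positivity
  -- collect all eventual facts
  have Hall : ∀ᶠ k in atTop, 0 < t k ∧ x k ∈ ball xb δ ∧ z k ∈ ball xb δ ∧
      dist (x k) (z k) ≤ κ * d k + t k ^ 2 ∧ ‖v k‖ ≤ C ∧ z k ∈ Ω := by
    have Ht1 : ∀ᶠ k in atTop, 0 < t k := ht self_mem_nhdsWithin
    have Ht2 : ∀ᶠ k in atTop, t k ≤ 1 := ht0.eventually_le_const one_pos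
    have Hx : ∀ᶠ k in atTop, x k ∈ ball xb δ := hx (ball_mem_nhds _ hδ)
    have HMS : ∀ᶠ k in atTop, infDist (x k) Ω ≤ κ * d k := hx.eventually hMS
    have Hn : ∀ᶠ k in atTop, ‖(t k)⁻¹ • (F (x k) - F xb)‖ ≤ ‖dF w‖ + 1 :=
      hnorm.eventually_le_const (lt_add_one _)
    have Hω : ∀ᶠ k in atTop, ‖ω k‖ ≤ ‖w‖ + 1 := hω.norm.eventually_le_const (lt_add_one _)
    have Ht3 : ∀ᶠ k in atTop, t k * C < δ := by
      have : Tendsto (fun k => t k * C) atTop (𝓝 (0 * C)) := ht0.mul_const C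
      rw [zero_mul] at this
      exact this.eventually_lt_const hδ
    have Hxδ : ∀ᶠ k in atTop, dist (x k) xb < δ / 2 ∨ True := Eventually.of_forall fun _ => Or.inr trivial
    filter_upwards [Ht1, Ht2, Hx, HMS, Hn, Hω, Ht3] with k h1 h2 h3 h4 h5 h6 h7
    obtain ⟨hzΩ, hzd⟩ := hz k h1
    -- d k ≤ t k * (‖dF w‖ + 1)
    have hd1 : d k ≤ t k * (‖dF w‖ + 1) := by
      have e1 : d k ≤ dist (F (x k)) (F xb) := infDist_le_dist_of_mem hxb
      have e2 : dist (F (x k)) (F xb) = t k * ‖(t k)⁻¹ • (F (x k) - F xb)‖ := by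
        rw [dist_eq_norm, norm_smul, Real.norm_eq_abs, abs_inv, abs_of_pos h1]
        field_simp
      calc d k ≤ dist (F (x k)) (F xb) := e1
        _ = t k * ‖(t k)⁻¹ • (F (x k) - F xb)‖ := e2
        _ ≤ t k * (‖dF w‖ + 1) := by nlinarith
    have hdist : dist (x k) (z k) ≤ κ * d k + t k ^ 2 := le_of_lt (lt_of_lt_of_le hzd (by linarith))
    have hdist2 : dist (x k) (z k) ≤ t k * (κ * (‖dF w‖ + 1) + 1) := by
      have := mul_le_mul_of_nonneg_left hd1 hκ.le
      nlinarith
    have hxxb : dist (x k) xb ≤ t k * (‖w‖ + 1) := by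
      have : dist (x k) xb = t k * ‖ω k‖ := by
        show dist (xb + t k • ω k) xb = _
        rw [dist_eq_norm, add_sub_cancel_left, norm_smul, Real.norm_eq_abs, abs_of_pos h1]
      rw [this]
      nlinarith
    have hzxb : dist (z k) xb ≤ t k * C := by
      calc dist (z k) xb ≤ dist (z k) (x k) + dist (x k) xb := dist_triangle _ _ _
        _ = dist (x k) (z k) + dist (x k) xb := by rw [dist_comm]
        _ ≤ t k * (κ * (‖dF w‖ + 1) + 1) + t k * (‖w‖ + 1) := by linarith
        _ = t k * C := by rw [hCdef]; ring
    have hzball : z k ∈ ball xb δ := by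
      rw [mem_ball]
      exact lt_of_le_of_lt hzxb h7
    have hvb : ‖v k‖ ≤ C := by
      have e3 : ‖v k‖ = (t k)⁻¹ * ‖z k - xb‖ := by
        show ‖(t k)⁻¹ • (z k - xb)‖ = _
        rw [norm_smul, Real.norm_eq_abs, abs_inv, abs_of_pos h1]
      have e4 : ‖z k - xb‖ ≤ t k * C := by rw [← dist_eq_norm]; exact hzxb
      rw [e3]
      calc (t k)⁻¹ * ‖z k - xb‖ ≤ (t k)⁻¹ * (t k * C) :=
          mul_le_mul_of_nonneg_left e4 (inv_nonneg.mpr h1.le)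
        _ = C := by field_simp
    exact ⟨h1, h3, hzball, hdist, hvb, hzΩ⟩
  obtain ⟨N, hN⟩ := eventually_atTop.mp Hall
  -- Bolzano–Weierstrass on v ∘ (· + N)
  have hvmem : ∀ k, v (k + N) ∈ closedBall (0 : En n) C := by
    intro k
    rw [mem_closedBall, dist_zero_right]
    exact (hN (k + N) (Nat.le_add_left N k)).2.2.2.2.1
  obtain ⟨a, -, ψ, hψ, hva⟩ := tendsto_subseq_of_bounded isBounded_closedBall hvmem
  set σ : ℕ → ℕ := fun k => ψ k + N with hσdef
  have hσN : ∀ k, N ≤ σ k := fun k => Nat.le_add_left N (ψ k)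
  have hσtop : Tendsto σ atTop atTop :=
    tendsto_atTop_mono (fun k => Nat.le_add_right _ _) hψ.tendsto_atTop
  have hP : ∀ k, 0 < t (σ k) ∧ x (σ k) ∈ ball xb δ ∧ z (σ k) ∈ ball xb δ ∧
      dist (x (σ k)) (z (σ k)) ≤ κ * d (σ k) + t (σ k) ^ 2 ∧ ‖v (σ k)‖ ≤ C ∧ z (σ k) ∈ Ω :=
    fun k => hN _ (hσN k)
  have htσ : Tendsto (fun k => t (σ k)) atTop (𝓝[>] (0:ℝ)) := ht.comp hσtop
  have htσ0 : Tendsto (fun k => t (σ k)) atTop (𝓝 (0:ℝ)) := ht0.comp hσtop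
  have hvσ : Tendsto (fun k => v (σ k)) atTop (𝓝 a) := hva
  have hpair : Tendsto (fun k => (t (σ k), v (σ k))) atTop ((𝓝[>] (0:ℝ)) ×ˢ 𝓝 a) :=
    htσ.prodMk hvσ
  -- dF a is tangent
  have htc : dF a ∈ tanCone X (F xb) := by
    refine ⟨fun k => t (σ k), fun k => (t (σ k))⁻¹ • (F (z (σ k)) - F xb),
      fun k => (hP k).1, htσ0, ?_, ?_⟩
    · have h2 := (hF a).comp hpair
      refine h2.congr fun k => ?_
      simp only [Function.comp]
      rw [hzv _ (hP k).1]
    · intro k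
      rw [smul_inv_smul₀ (hP k).1.ne', add_sub_cancel]
      exact (hP k).2.2.2.2.2
  have hsub : (0 : EReal) ≤ subderiv φ xb a := hstat a htc
  -- lower bound the liminf along the sequence (t σ, v σ)
  have h1 : subderiv φ xb a ≤
      Filter.liminf (fun k => (((φ (z (σ k)) - φ xb) / t (σ k) : ℝ) : EReal)) atTop := by
    have h2 := liminf_comp_le
      (fun p : ℝ × En n => (((φ (xb + p.1 • p.2) - φ xb) / p.1 : ℝ) : EReal))
      (fun k => (t (σ k), v (σ k))) hpair
    refine le_trans h2 (le_of_eq (Filter.liminf_congr ?_))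
    exact Eventually.of_forall fun k => by
      show (((φ (xb + t (σ k) • v (σ k)) - φ xb) / t (σ k) : ℝ) : EReal) = _
      rw [hzv _ (hP k).1]
  -- upper bound via the penalty quotient
  have key : ∀ k, (φ (z (σ k)) - φ xb) / t (σ k) ≤ c + ℓ * t (σ k) := by
    intro k
    obtain ⟨hp, hxball, hzball, hdist, -, -⟩ := hP k
    have hq' := hq (σ k)
    rw [hFxb0] at hq'
    have hlip := hL (z (σ k)) hzball (x (σ k)) hxball
    have hφz : φ (z (σ k)) ≤ φ (x (σ k)) + ℓ * dist (x (σ k)) (z (σ k)) := by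
      rw [dist_comm] at hlip
      have h5 := abs_le.mp hlip
      linarith [h5.2]
    have hd0 : 0 ≤ d (σ k) := infDist_nonneg
    have hρd : κ * ℓ * d (σ k) ≤ ρ * d (σ k) := mul_le_mul_of_nonneg_right hρ hd0
    have hnum : φ (z (σ k)) - φ xb ≤
        (φ (x (σ k)) + ρ * d (σ k) - (φ xb + ρ * 0)) + ℓ * t (σ k) * t (σ k) := by
      have hℓdist : ℓ * dist (x (σ k)) (z (σ k)) ≤ ℓ * (κ * d (σ k) + t (σ k) ^ 2) :=
        mul_le_mul_of_nonneg_left hdist hℓ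
      nlinarith [sq_nonneg (t (σ k))]
    have hdiv : (φ (z (σ k)) - φ xb) / t (σ k) ≤
        ((φ (x (σ k)) + ρ * d (σ k) - (φ xb + ρ * 0)) + ℓ * t (σ k) * t (σ k)) / t (σ k) :=
      div_le_div_of_nonneg_right hnum hp.le
    have heq : ((φ (x (σ k)) + ρ * d (σ k) - (φ xb + ρ * 0)) + ℓ * t (σ k) * t (σ k)) / t (σ k)
        = (φ (x (σ k)) + ρ * d (σ k) - (φ xb + ρ * 0)) / t (σ k) + ℓ * t (σ k) := by
      field_simp
    rw [heq] at hdiv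
    linarith
  have h2 : Filter.liminf (fun k => (((φ (z (σ k)) - φ xb) / t (σ k) : ℝ) : EReal)) atTop
      ≤ ((c : ℝ) : EReal) := by
    have hcl : Tendsto (fun k => ((c + ℓ * t (σ k) : ℝ) : EReal)) atTop (𝓝 ((c : ℝ) : EReal)) := by
      rw [EReal.tendsto_coe]
      have h3 := htσ0.const_mul ℓ
      rw [mul_zero] at h3
      simpa using tendsto_const_nhds.add h3
    calc Filter.liminf (fun k => (((φ (z (σ k)) - φ xb) / t (σ k) : ℝ) : EReal)) atTop
        ≤ Filter.liminf (fun k => ((c + ℓ * t (σ k) : ℝ) : EReal)) atTop :=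
          Filter.liminf_le_liminf (Eventually.of_forall fun k => by exact_mod_cast key k)
      _ = ((c : ℝ) : EReal) := hcl.liminf_eq
  have hfin : (0 : EReal) ≤ ((c : ℝ) : EReal) := le_trans hsub (le_trans h1 h2)
  exact absurd (lt_of_le_of_lt hfin hc2) (lt_irrefl _)
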